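/- Let p and q be processes with p ≡_S q. Then: (a) I(p) = I(q), and for every a ∈ I(p) there exist transitions p —a→ p* and q —a→ q* with p* ≡_S q*; (b) for every transition p —a→ p', either there is a transition q —a→ q' with p' ≡_S q', or there exist transitions p —a→ p* and q —a→ q* such that p* ≡_S q* and p' ≲_S p*. -/
import Mathlib


/-- Finite, loop-free CCS processes over the action set `Act`:
`p ::= 0 | a.p | p + p`. -/
inductive Proc (Act : Type) : Type
  | nil : Proc Act
  | pre : Act → Proc Act → Proc Act
  | plus : Proc Act → Proc Act → Proc Act

/-- The transition relation: `a.p —a→ p`, and `p₁ + p₂ —a→ p'` iff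
`p₁ —a→ p'` or `p₂ —a→ p'`. -/
inductive Step {Act : Type} : Proc Act → Act → Proc Act → Prop
  | pre (a : Act) (p : Proc Act) : Step (Proc.pre a p) a p
  | plusL : ∀ {p₁ p₂ p' : Proc Act} {a : Act},
      Step p₁ a p' → Step (Proc.plus p₁ p₂) a p'
  | plusR : ∀ {p₁ p₂ p' : Proc Act} {a : Act},
      Step p₂ a p' → Step (Proc.plus p₁ p₂) a p'

/-- HML formulas in negation normal form:
`φ ::= tt | ff | φ∧φ | φ∨φ | ⟨a⟩φ | [a]φ`. -/
inductive HML (Act : Type) : Type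
  | tt : HML Act
  | ff : HML Act
  | conj : HML Act → HML Act → HML Act
  | disj : HML Act → HML Act → HML Act
  | dia : Act → HML Act → HML Act
  | box : Act → HML Act → HML Act

/-- The satisfaction relation `p ⊨ φ`. -/
def Sat {Act : Type} : Proc Act → HML Act → Prop
  | _, HML.tt => True
  | _, HML.ff => False
  | p, HML.conj φ ψ => Sat p φ ∧ Sat p ψ
  | p, HML.disj φ ψ => Sat p φ ∨ Sat p ψ
  | p, HML.dia a φ => ∃ p', Step p a p' ∧ Sat p' φ
  | p, HML.box a φ => ∀ p', Step p a p' → Sat p' φ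

/-- `φ` entails `ψ` iff every process satisfying `φ` satisfies `ψ`. -/
def Entails {Act : Type} (φ ψ : HML Act) : Prop :=
  ∀ p : Proc Act, Sat p φ → Sat p ψ

/-- `R` is a simulation relation. -/
def IsSimulation {Act : Type} (R : Proc Act → Proc Act → Prop) : Prop :=
  ∀ p q, R p q → ∀ a p', Step p a p' → ∃ q', Step q a q' ∧ R p' q'

/-- The simulation preorder `≲_S`: the largest simulation. -/
def Sim {Act : Type} (p q : Proc Act) : Prop :=
  ∃ R, IsSimulation R ∧ R p q

/-- The set `I(p)` of initial actions of a process. -/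
def initials {Act : Type} (p : Proc Act) : Set Act :=
  {a | ∃ p', Step p a p'}

theorem sim_step' {Act : Type} {p q : Proc Act} (h : Sim p q) {a : Act}
    {p' : Proc Act} (hs : Step p a p') : ∃ q', Step q a q' ∧ Sim p' q' := by
  obtain ⟨R, hR, hpq⟩ := h
  obtain ⟨q', hq', hR'⟩ := hR p q hpq a p' hs
  exact ⟨q', hq', R, hR, hR'⟩

theorem sim_refl' {Act : Type} (p : Proc Act) : Sim p p :=
  ⟨Eq, fun _ _ h _ p' hs => ⟨p', h ▸ hs, rfl⟩, rfl⟩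

theorem sim_trans' {Act : Type} {p q r : Proc Act} (h1 : Sim p q)
    (h2 : Sim q r) : Sim p r := by
  refine ⟨fun x z => ∃ y, Sim x y ∧ Sim y z, ?_, q, h1, h2⟩
  rintro x z ⟨y, hxy, hyz⟩ a x' hs
  obtain ⟨y', hy', hxy'⟩ := sim_step' hxy hs
  obtain ⟨z', hz', hyz'⟩ := sim_step' hyz hy'
  exact ⟨z', hz', y', hxy', hyz'⟩

/-- All subterms of a process. -/
def subs {Act : Type} : Proc Act → List (Proc Act)
  | Proc.nil => [Proc.nil]
  | Proc.pre a p => Proc.pre a p :: subs p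
  | Proc.plus p q => Proc.plus p q :: (subs p ++ subs q)

theorem self_mem_subs {Act : Type} (p : Proc Act) : p ∈ subs p := by
  cases p <;> simp [subs]

theorem step_mem_subs {Act : Type} : ∀ {p : Proc Act} {a : Act}
    {p' : Proc Act}, Step p a p' → p' ∈ subs p := by
  intro p a p' hs
  induction hs with
  | pre a p => exact List.mem_cons_of_mem _ (self_mem_subs p)
  | plusL _ ih => simp [subs]; right; left; exact ih
  | plusR _ ih => simp [subs]; right; right; exact ih

theorem sim_key {Act : Type} {p q : Proc Act} (h1 : Sim p q) (h2 : Sim q p)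
    {a : Act} {p' : Proc Act} (hs : Step p a p') :
    ∃ ps qs : Proc Act, Step p a ps ∧ Step q a qs ∧ Sim ps qs ∧ Sim qs ps ∧
      Sim p' ps := by
  classical
  let S := {x : Proc Act × Proc Act // Step p a x.1 ∧ Step q a x.2 ∧ Sim x.1 x.2}
  have hnext : ∀ x : S, ∃ y : S, Sim x.val.2 y.val.1 := by
    rintro ⟨⟨pn, qn⟩, hp, hq, hsim⟩
    obtain ⟨pn1, hp1, hqp⟩ := sim_step' h2 hq
    obtain ⟨qn1, hq1, hsim1⟩ := sim_step' h1 hp1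
    exact ⟨⟨(pn1, qn1), hp1, hq1, hsim1⟩, hqp⟩
  choose nxt hnxt using hnext
  obtain ⟨q0, hq0, hpq0⟩ := sim_step' h1 hs
  let x0 : S := ⟨(p', q0), hs, hq0, hpq0⟩
  let f : ℕ → S := fun n => Nat.rec x0 (fun _ x => nxt x) n
  have hlink : ∀ n, Sim (f n).val.2 (f (n + 1)).val.1 := fun n => hnxt (f n)
  have hchain : ∀ m n, m ≤ n → Sim (f m).val.1 (f n).val.1 := by
    intro m n hmn
    induction hmn with
    | refl => exact sim_refl' _
    | step _ ih =>
        exact sim_trans' ih (sim_trans' (f _).prop.2.2 (hlink _))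
  have hmem : ∀ n, (f n).val.1 ∈ subs p := fun n => step_mem_subs (f n).prop.1
  haveI : Finite {x : Proc Act // x ∈ subs p} :=
    ((subs p).finite_toSet).to_subtype
  obtain ⟨m, n, hmn, heq⟩ := Finite.exists_ne_map_eq_of_infinite
    (fun n => (⟨(f n).val.1, hmem n⟩ : {x : Proc Act // x ∈ subs p}))
  have heq' : (f m).val.1 = (f n).val.1 := congrArg Subtype.val heq
  -- WLOG m < n
  obtain ⟨m, n, hlt, heq''⟩ :
      ∃ m n, m < n ∧ (f m).val.1 = (f n).val.1 := by
    rcases lt_or_gt_of_ne hmn with h' | h'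
    · exact ⟨m, n, h', heq'⟩
    · exact ⟨n, m, h', heq'.symm⟩
  refine ⟨(f m).val.1, (f m).val.2, (f m).prop.1, (f m).prop.2.1,
    (f m).prop.2.2, ?_, ?_⟩
  · have := hchain (m + 1) n hlt
    exact sim_trans' (hlink m) (heq'' ▸ this)
  · have h0 : (f 0).val.1 = p' := rfl
    exact h0 ▸ hchain 0 m (Nat.zero_le m)

/-- Let `p ≡_S q`. Then: (a) `I(p) = I(q)`, and for every `a ∈ I(p)` there are
`p —a→ p*` and `q —a→ q*` with `p* ≡_S q*`; (b) for every `p —a→ p'`, either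
there is `q —a→ q'` with `p' ≡_S q'`, or there are `p —a→ p*` and `q —a→ q*`
with `p* ≡_S q*` and `p' ≲_S p*`. -/
theorem simEquiv_transfer {Act : Type} [Fintype Act] [Nonempty Act]
    (p q : Proc Act) (h : Sim p q ∧ Sim q p) :
    (initials p = initials q ∧
      ∀ a ∈ initials p, ∃ pstar qstar : Proc Act,
        Step p a pstar ∧ Step q a qstar ∧ (Sim pstar qstar ∧ Sim qstar pstar)) ∧
    (∀ (a : Act) (p' : Proc Act), Step p a p' →
      (∃ q' : Proc Act, Step q a q' ∧ (Sim p' q' ∧ Sim q' p')) ∨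
      (∃ pstar qstar : Proc Act, Step p a pstar ∧ Step q a qstar ∧
        (Sim pstar qstar ∧ Sim qstar pstar) ∧ Sim p' pstar)) := by
  obtain ⟨h1, h2⟩ := h
  refine ⟨⟨?_, ?_⟩, ?_⟩
  · ext a
    constructor
    · rintro ⟨p', hp'⟩
      obtain ⟨q', hq', -⟩ := sim_step' h1 hp'
      exact ⟨q', hq'⟩
    · rintro ⟨q', hq'⟩
      obtain ⟨p', hp', -⟩ := sim_step' h2 hq'
      exact ⟨p', hp'⟩
  · rintro a ⟨p', hp'⟩
    obtain ⟨ps, qs, hps, hqs, hsim1, hsim2, -⟩ := sim_key h1 h2 hp'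
    exact ⟨ps, qs, hps, hqs, hsim1, hsim2⟩
  · intro a p' hp'
    obtain ⟨ps, qs, hps, hqs, hsim1, hsim2, hle⟩ := sim_key h1 h2 hp'
    exact Or.inr ⟨ps, qs, hps, hqs, ⟨hsim1, hsim2⟩, hle⟩
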